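/- arXiv:1811.09025 — 3 statements merged into one kernel-verified Lean document; each statement's English description precedes it below -/
import Mathlib

section
/- Let A be an invertible real n×n matrix, b, x₀ ∈ ℝⁿ, and r₀ = b − A x₀. Then there exists x ∈ x₀ + 𝒦_{n−1}(A, r₀) with A x = b; in other words, the GMRES minimization min ‖b − Ax‖₂ over x ∈ x₀ + 𝒦_{n−1}(A, r₀) attains the value 0, so GMRES obtains the exact solution after at most n iterations. -/
open Matrix

/-- The Krylov subspace `𝒦ₘ(A, r₀) = span {r₀, A r₀, …, Aᵐ r₀}`. -/
def krylov {n : ℕ} (A : Matrix (Fin n) (Fin n) ℝ) (r₀ : Fin n → ℝ) (m : ℕ) :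
    Submodule ℝ (Fin n → ℝ) :=
  Submodule.span ℝ (Set.range fun i : Fin (m + 1) => (A ^ (i : ℕ)) *ᵥ r₀)

/-- For an invertible `A`, the exact solution of `A x = b` lies in the affine
set `x₀ + 𝒦_{n-1}(A, r₀)`: there exists `x ∈ x₀ + 𝒦_{n-1}(A, r₀)` with
`A x = b`, so the GMRES minimization over this set attains the value `0` and
GMRES obtains the exact solution after at most `n` iterations. -/
theorem gmres_exact_in_n_steps {n : ℕ}
    (A : Matrix (Fin n) (Fin n) ℝ) (hA : IsUnit A)
    (b x₀ : Fin n → ℝ) (r₀ : Fin n → ℝ) (hr₀ : r₀ = b - A *ᵥ x₀) :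
    ∃ z ∈ krylov A r₀ (n - 1), A *ᵥ (x₀ + z) = b := by
  rcases Nat.eq_zero_or_pos n with hn | hn
  · subst hn
    exact ⟨0, Submodule.zero_mem _, funext fun i => i.elim0⟩
  -- characteristic polynomial coefficients
  set p := A.charpoly with hp
  set c : ℕ → ℝ := fun i => p.coeff i with hc
  have hdet : IsUnit A.det := (Matrix.isUnit_iff_isUnit_det A).mp hA
  have hc0 : c 0 ≠ 0 := by
    intro h
    have := Matrix.det_eq_sign_charpoly_coeff A
    rw [Fintype.card_fin] at this
    apply hdet.ne_zero
    rw [this]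
    have h' : A.charpoly.coeff 0 = 0 := h
    simp [h']
  have hdeg : p.natDegree = n := by
    rw [hp, Matrix.charpoly_natDegree_eq_dim, Fintype.card_fin]
  -- Cayley–Hamilton
  have hCH : (Polynomial.aeval A) p = 0 := Matrix.aeval_self_charpoly A
  have hsum : ∑ i ∈ Finset.range (n + 1), c i • (A ^ i) = 0 := by
    have := Polynomial.aeval_eq_sum_range (x := A) (p := p)
    rw [hdeg] at this
    rw [← this, hCH]
  have hsumv : ∑ i ∈ Finset.range (n + 1), c i • ((A ^ i) *ᵥ r₀) = 0 := by
    have h1 := congrArg (fun M : Matrix (Fin n) (Fin n) ℝ => Matrix.toLin' M r₀) hsum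
    simpa [map_sum, LinearMap.sum_apply, Matrix.toLin'_apply, LinearMap.smul_apply,
      Matrix.smul_mulVec, -Matrix.toLin'_pow] using h1
  -- peel off the i = 0 term
  have hsplit : ∑ i ∈ Finset.range n, c (i + 1) • ((A ^ (i + 1)) *ᵥ r₀)
      = -(c 0 • ((A ^ 0) *ᵥ r₀)) := by
    rw [Finset.sum_range_succ'] at hsumv
    linear_combination (norm := module) hsumv
  refine ⟨∑ i ∈ Finset.range n, (-(c (i + 1)) / c 0) • ((A ^ i) *ᵥ r₀), ?_, ?_⟩
  · apply Submodule.sum_mem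
    intro i hi
    apply Submodule.smul_mem
    apply Submodule.subset_span
    refine ⟨⟨i, ?_⟩, rfl⟩
    have := Finset.mem_range.mp hi
    omega
  · have hAz : A *ᵥ (∑ i ∈ Finset.range n, (-(c (i + 1)) / c 0) • ((A ^ i) *ᵥ r₀)) = r₀ := by
      have step : A *ᵥ (∑ i ∈ Finset.range n, (-(c (i + 1)) / c 0) • ((A ^ i) *ᵥ r₀))
          = ∑ i ∈ Finset.range n, (-(c (i + 1)) / c 0) • ((A ^ (i + 1)) *ᵥ r₀) := by
        rw [← Matrix.mulVecLin_apply, map_sum]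
        refine Finset.sum_congr rfl fun i _ => ?_
        rw [_root_.map_smul, Matrix.mulVecLin_apply, Matrix.mulVec_mulVec, ← pow_succ']
      rw [step]
      have factor : ∑ i ∈ Finset.range n, (-(c (i + 1)) / c 0) • ((A ^ (i + 1)) *ᵥ r₀)
          = (-(1 / c 0)) • ∑ i ∈ Finset.range n, c (i + 1) • ((A ^ (i + 1)) *ᵥ r₀) := by
        rw [Finset.smul_sum]
        refine Finset.sum_congr rfl fun i _ => ?_
        rw [smul_smul]
        congr 1
        field_simp
      rw [factor, hsplit, smul_neg, smul_smul]
      have : -(1 / c 0) * c 0 = -1 := by field_simp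
      rw [this]
      simp [Matrix.one_mulVec]
    rw [Matrix.mulVec_add, hAz, hr₀]
    abel
end

section
/- Let A be a symmetric real n×n matrix and r₀ ∈ ℝⁿ. For any real polynomial q, ‖q(A) r₀‖₂ ≤ (max over eigenvalues λ of A of |q(λ)|) · ‖r₀‖₂. Consequently, for the GMRES iterate minimizing the residual over x₀ + 𝒦ₘ(A, r₀) with r₀ = b − A x₀ ≠ 0, the relative residual satisfies ‖b − A xₘ‖₂ / ‖r₀‖₂ ≤ min over polynomials q of degree at most m+1 with q(0) = 1 of max over eigenvalues λ of A of |q(λ)|. -/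
open Matrix Polynomial

/-- The Euclidean (ℓ²) norm of a vector in `Fin k → ℝ`. -/
noncomputable def norm2 {k : ℕ} (x : Fin k → ℝ) : ℝ := Real.sqrt (x ⬝ᵥ x)

lemma norm2_nonneg {k : ℕ} (x : Fin k → ℝ) : 0 ≤ norm2 x := Real.sqrt_nonneg _

lemma norm2_pos {k : ℕ} {x : Fin k → ℝ} (hx : x ≠ 0) : 0 < norm2 x := by
  obtain ⟨i, hi⟩ := Function.ne_iff.mp hx
  have h2 : x i * x i ≤ x ⬝ᵥ x :=
    Finset.single_le_sum (fun j _ => mul_self_nonneg (x j)) (Finset.mem_univ i)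
  exact Real.sqrt_pos.mpr (lt_of_lt_of_le (mul_self_pos.mpr hi) h2)

lemma norm2_unitary {k : ℕ} (U : Matrix (Fin k) (Fin k) ℝ) (hU : Uᵀ * U = 1)
    (x : Fin k → ℝ) : norm2 (U *ᵥ x) = norm2 x := by
  unfold norm2
  have h : (U *ᵥ x) ᵥ* U = x := by
    rw [← vecMul_transpose, vecMul_vecMul, hU, vecMul_one]
  rw [dotProduct_mulVec, h]

lemma norm2_diagonal_le {k : ℕ} (e y : Fin k → ℝ) (C : ℝ) (hC : 0 ≤ C)
    (h : ∀ i, |e i| ≤ C) : norm2 (diagonal e *ᵥ y) ≤ C * norm2 y := by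
  unfold norm2
  have h1 : (diagonal e *ᵥ y) ⬝ᵥ (diagonal e *ᵥ y) ≤ C ^ 2 * (y ⬝ᵥ y) := by
    unfold dotProduct
    rw [Finset.mul_sum]
    refine Finset.sum_le_sum fun i _ => ?_
    rw [mulVec_diagonal]
    have he : e i * e i ≤ C * C := by
      calc e i * e i = |e i| * |e i| := (abs_mul_abs_self _).symm
        _ ≤ C * C := mul_le_mul (h i) (h i) (abs_nonneg _) hC
    calc e i * y i * (e i * y i) = (e i * e i) * (y i * y i) := by ring
      _ ≤ (C * C) * (y i * y i) :=
          mul_le_mul_of_nonneg_right he (mul_self_nonneg _)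
      _ = C ^ 2 * (y i * y i) := by ring
  calc Real.sqrt ((diagonal e *ᵥ y) ⬝ᵥ (diagonal e *ᵥ y))
      ≤ Real.sqrt (C ^ 2 * (y ⬝ᵥ y)) := Real.sqrt_le_sqrt h1
    _ = C * Real.sqrt (y ⬝ᵥ y) := by
        rw [Real.sqrt_mul (by positivity), Real.sqrt_sq hC]

lemma pow_unitary_conj {k : ℕ} (U D : Matrix (Fin k) (Fin k) ℝ) (hU : Uᵀ * U = 1)
    (hU' : U * Uᵀ = 1) (j : ℕ) : (U * D * Uᵀ) ^ j = U * D ^ j * Uᵀ := by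
  induction j with
  | zero => simp [hU']
  | succ j ih =>
      rw [pow_succ, ih, pow_succ]
      have h2 : U * D ^ j * Uᵀ * (U * D * Uᵀ) = U * (D ^ j * ((Uᵀ * U) * (D * Uᵀ))) := by
        simp only [Matrix.mul_assoc]
      rw [h2, hU, Matrix.one_mul]
      simp only [Matrix.mul_assoc]

lemma aeval_conj {k : ℕ} (U D : Matrix (Fin k) (Fin k) ℝ) (hU : Uᵀ * U = 1)
    (hU' : U * Uᵀ = 1) (q : Polynomial ℝ) :
    aeval (U * D * Uᵀ) q = U * aeval D q * Uᵀ := by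
  induction q using Polynomial.induction_on' with
  | add p r hp hr => rw [map_add, hp, hr, map_add, Matrix.mul_add, Matrix.add_mul]
  | monomial j a =>
      rw [aeval_monomial, aeval_monomial, pow_unitary_conj U D hU hU' j]
      simp [Algebra.algebraMap_eq_smul_one, Matrix.smul_mul, Matrix.mul_smul, smul_mul_assoc, Matrix.mul_assoc]

lemma aeval_diagonal {k : ℕ} (d : Fin k → ℝ) (q : Polynomial ℝ) :
    aeval (diagonal d) q = diagonal (fun i => q.eval (d i)) := by
  have h := Polynomial.aeval_algHom_apply (Matrix.diagonalAlgHom (n := Fin k) (α := ℝ) ℝ) d q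
  simp only [Matrix.diagonalAlgHom_apply] at h
  have h3 : (aeval d) q = fun i => q.eval (d i) := by
    funext i
    have h2 := Polynomial.aeval_algHom_apply (Pi.evalAlgHom ℝ (fun _ : Fin k => ℝ) i) d q
    simp only [Pi.evalAlgHom_apply] at h2
    rw [← h2, aeval_def, eval₂_eq_eval_map, Algebra.algebraMap_self, Polynomial.map_id]
  rw [h, h3]

/-- Key spectral bound. -/
lemma key_bound {n : ℕ} (A : Matrix (Fin n) (Fin n) ℝ) (hA : A.IsHermitian)
    (v : Fin n → ℝ) (q : Polynomial ℝ) :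
    norm2 ((aeval A q) *ᵥ v) ≤ (⨆ lam ∈ spectrum ℝ A, |q.eval lam|) * norm2 v := by
  rcases Nat.eq_zero_or_pos n with hn | hn
  · subst hn
    have : ∀ x : Fin 0 → ℝ, norm2 x = 0 := by
      intro x; simp [norm2, dotProduct]
    rw [this, this]; simp
  set C := ⨆ lam ∈ spectrum ℝ A, |q.eval lam| with hC
  set d := hA.eigenvalues with hd
  have hspec : spectrum ℝ A = Set.range d := hA.spectrum_real_eq_range_eigenvalues
  -- boundedness of the family
  set M : ℝ := ∑ i : Fin n, |q.eval (d i)| with hM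
  have hM0 : 0 ≤ M := Finset.sum_nonneg fun i _ => abs_nonneg _
  have hfle : ∀ lam : ℝ, (⨆ _ : lam ∈ spectrum ℝ A, |q.eval lam|) ≤ M := by
    intro lam
    by_cases hlam : lam ∈ spectrum ℝ A
    · rw [ciSup_pos hlam]
      obtain ⟨i, rfl⟩ := hspec ▸ hlam
      exact Finset.single_le_sum (f := fun j => |q.eval (d j)|) (fun j _ => abs_nonneg _) (Finset.mem_univ i)
    · haveI : IsEmpty (lam ∈ spectrum ℝ A) := ⟨hlam⟩
      rw [Real.iSup_of_isEmpty]
      exact hM0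
  have hbdd : BddAbove (Set.range fun lam => ⨆ _ : lam ∈ spectrum ℝ A, |q.eval lam|) := by
    refine ⟨M, ?_⟩
    rintro x ⟨lam, rfl⟩
    exact hfle lam
  have hCb : ∀ lam ∈ spectrum ℝ A, |q.eval lam| ≤ C := by
    intro lam hlam
    have := le_ciSup hbdd lam
    rwa [ciSup_pos hlam] at this
  have hC0 : 0 ≤ C := by
    have i0 : Fin n := ⟨0, hn⟩
    exact le_trans (abs_nonneg _) (hCb (d i0) (hspec ▸ ⟨i0, rfl⟩))
  -- spectral theorem
  set V : Matrix (Fin n) (Fin n) ℝ := (hA.eigenvectorUnitary : Matrix (Fin n) (Fin n) ℝ) with hV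
  have hstar : star (V : Matrix (Fin n) (Fin n) ℝ) = Vᵀ := by
    rw [Matrix.star_eq_conjTranspose, conjTranspose_eq_transpose_of_trivial]
  have hU1 : Vᵀ * V = 1 := by
    rw [← hstar]; exact Unitary.star_mul_self_of_mem hA.eigenvectorUnitary.2
  have hU2 : V * Vᵀ = 1 := by
    rw [← hstar]; exact Unitary.mul_star_self_of_mem hA.eigenvectorUnitary.2
  have hspect : A = V * diagonal d * Vᵀ := by
    have := hA.spectral_theorem
    rw [Unitary.conjStarAlgAut_apply, hstar] at this
    simpa using this
  have hq : aeval A q = V * diagonal (fun i => q.eval (d i)) * Vᵀ := by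
    rw [hspect, aeval_conj _ _ hU1 hU2, aeval_diagonal]
  rw [hq]
  have hmv : (V * diagonal (fun i => q.eval (d i)) * Vᵀ) *ᵥ v
      = V *ᵥ (diagonal (fun i => q.eval (d i)) *ᵥ (Vᵀ *ᵥ v)) := by
    rw [mulVec_mulVec, mulVec_mulVec]
  rw [hmv, norm2_unitary V hU1]
  have h2 : norm2 (Vᵀ *ᵥ v) = norm2 v := by
    apply norm2_unitary Vᵀ
    rw [transpose_transpose, hU2]
  calc norm2 (diagonal (fun i => q.eval (d i)) *ᵥ (Vᵀ *ᵥ v))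
      ≤ C * norm2 (Vᵀ *ᵥ v) := by
        apply norm2_diagonal_le _ _ _ hC0
        intro i
        exact hCb (d i) (hspec ▸ ⟨i, rfl⟩)
    _ = C * norm2 v := by rw [h2]

lemma mem_krylov {n m : ℕ} (A : Matrix (Fin n) (Fin n) ℝ) (r₀ : Fin n → ℝ)
    (p : Polynomial ℝ) (hp : p.natDegree ≤ m) :
    (aeval A p) *ᵥ r₀ ∈ krylov A r₀ m := by
  rw [Polynomial.aeval_eq_sum_range' (lt_of_le_of_lt hp (Nat.lt_succ_self m))]
  have hsum : (∑ i ∈ Finset.range m.succ, p.coeff i • A ^ i) *ᵥ r₀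
      = ∑ i ∈ Finset.range m.succ, (p.coeff i • A ^ i) *ᵥ r₀ :=
    map_sum (Matrix.mulVec.addMonoidHomLeft r₀) _ _
  rw [hsum]
  apply Submodule.sum_mem
  intro i hi
  rw [smul_mulVec]
  apply Submodule.smul_mem
  apply Submodule.subset_span
  exact ⟨⟨i, Finset.mem_range.mp hi⟩, rfl⟩

/-- GMRES convergence bound for a symmetric matrix `A`: for any polynomial `q`,
`‖q(A) r₀‖₂ ≤ (max_{λ ∈ σ(A)} |q(λ)|) ‖r₀‖₂`, and consequently the GMRES
iterate `xₘ` minimizing the residual over `x₀ + 𝒦ₘ(A, r₀)` satisfies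
`‖b - A xₘ‖₂ / ‖r₀‖₂ ≤ min_{q, deg q ≤ m+1, q(0)=1} max_{λ ∈ σ(A)} |q(λ)|`. -/
theorem gmres_convergence_symmetric {n m : ℕ}
    (A : Matrix (Fin n) (Fin n) ℝ) (hsymm : Aᵀ = A)
    (b x₀ : Fin n → ℝ) (r₀ : Fin n → ℝ) (hr₀ : r₀ = b - A *ᵥ x₀)
    (hr₀ne : r₀ ≠ 0)
    (xm : Fin n → ℝ) (hxmK : xm - x₀ ∈ krylov A r₀ m)
    (hxmmin : ∀ x : Fin n → ℝ, x - x₀ ∈ krylov A r₀ m →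
      norm2 (b - A *ᵥ xm) ≤ norm2 (b - A *ᵥ x)) :
    (∀ q : Polynomial ℝ,
      norm2 ((aeval A q) *ᵥ r₀) ≤ (⨆ lam ∈ spectrum ℝ A, |q.eval lam|) * norm2 r₀) ∧
    norm2 (b - A *ᵥ xm) / norm2 r₀ ≤
      ⨅ q : {q : Polynomial ℝ // q.natDegree ≤ m + 1 ∧ q.eval 0 = 1},
        ⨆ lam ∈ spectrum ℝ A, |Polynomial.eval lam q.1| := by
  have hA : A.IsHermitian := by
    rw [Matrix.IsHermitian, conjTranspose_eq_transpose_of_trivial]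
    exact hsymm
  have part1 : ∀ q : Polynomial ℝ,
      norm2 ((aeval A q) *ᵥ r₀) ≤ (⨆ lam ∈ spectrum ℝ A, |q.eval lam|) * norm2 r₀ :=
    fun q => key_bound A hA r₀ q
  refine ⟨part1, ?_⟩
  have hpos : 0 < norm2 r₀ := norm2_pos hr₀ne
  have : Nonempty {q : Polynomial ℝ // q.natDegree ≤ m + 1 ∧ q.eval 0 = 1} :=
    ⟨⟨Polynomial.C 1, by simp, by simp⟩⟩
  apply le_ciInf
  rintro ⟨q, hdeg, h0⟩
  rw [div_le_iff₀ hpos]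
  set p := q.divX with hpdef
  have hp : p.natDegree ≤ m := by
    have h := q.natDegree_divX_eq_natDegree_tsub_one
    rw [hpdef]
    omega
  set x : Fin n → ℝ := x₀ - (aeval A p) *ᵥ r₀ with hx
  have hxK : x - x₀ ∈ krylov A r₀ m := by
    have : x - x₀ = -((aeval A p) *ᵥ r₀) := by
      rw [hx]; abel
    rw [this]
    exact Submodule.neg_mem _ (mem_krylov A r₀ p hp)
  have hqrec : Polynomial.X * p + Polynomial.C 1 = q := by
    rw [hpdef]
    have := q.X_mul_divX_add
    rwa [q.coeff_zero_eq_eval_zero, h0] at this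
  have hres : b - A *ᵥ x = (aeval A q) *ᵥ r₀ := by
    rw [← hqrec, map_add, _root_.map_mul, aeval_X, Polynomial.C_1, _root_.map_one, Matrix.add_mulVec,
      Matrix.one_mulVec, ← mulVec_mulVec]
    rw [hx, Matrix.mulVec_sub, hr₀]
    abel
  calc norm2 (b - A *ᵥ xm) ≤ norm2 (b - A *ᵥ x) := hxmmin x hxK
    _ = norm2 ((aeval A q) *ᵥ r₀) := by rw [hres]
    _ ≤ (⨆ lam ∈ spectrum ℝ A, |q.eval lam|) * norm2 r₀ := part1 q
end

section
/- Let A be a symmetric positive definite real n×n matrix with smallest eigenvalue λ_min and largest eigenvalue λ_max, let κ = λ_max/λ_min, let b, x₀ ∈ ℝⁿ, r₀ = b − A x₀, and let x* be the solution of Ax = b. Then for every m ≥ 1 there exists x ∈ x₀ + 𝒦_{m−1}(A, r₀) such that ‖x − x*‖_A ≤ 2 ((√κ − 1)/(√κ + 1))ᵐ ‖x₀ − x*‖_A; in particular the m-th conjugate gradient iterate, which minimizes ‖x − x*‖_A over x₀ + 𝒦_{m−1}(A, r₀), satisfies this bound. -/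
open Matrix

/-- The `A`-norm `‖z‖_A = √(zᵀ A z)` of a vector. -/
noncomputable def normA {n : ℕ} (A : Matrix (Fin n) (Fin n) ℝ)
    (z : Fin n → ℝ) : ℝ := Real.sqrt (z ⬝ᵥ (A *ᵥ z))

namespace CGAux

open Polynomial

lemma chebT_half_add_inv (γ : ℝ) (hγ : γ ≠ 0) :
    ∀ k : ℕ, (Chebyshev.T ℝ k).eval ((γ + γ⁻¹)/2) = (γ^k + γ⁻¹^k)/2 := by
  have H : ∀ k : ℕ, (Chebyshev.T ℝ k).eval ((γ + γ⁻¹)/2) = (γ^k + γ⁻¹^k)/2 ∧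
      (Chebyshev.T ℝ (k+1)).eval ((γ + γ⁻¹)/2) = (γ^(k+1) + γ⁻¹^(k+1))/2 := by
    intro k
    induction k with
    | zero => constructor <;> simp [Chebyshev.T_zero, Chebyshev.T_one]
    | succ k ih =>
      refine ⟨ih.2, ?_⟩
      have h2 : ((k:ℤ) + 1 + 1) = (k:ℤ) + 2 := by ring
      have heval := congrArg (Polynomial.eval ((γ + γ⁻¹)/2)) (Chebyshev.T_add_two ℝ (k : ℤ))
      push_cast
      rw [h2, heval]
      simp only [eval_sub, eval_mul, eval_ofNat, eval_X]
      rw [ih.1, ih.2]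
      have hγi : γ * γ⁻¹ = 1 := mul_inv_cancel₀ hγ
      field_simp
      linear_combination (γ * γ⁻¹ ^ k - γ⁻¹ * γ⁻¹ ^ k) * hγi
  exact fun k => (H k).1

lemma chebT_abs_le_one (t : ℝ) (h1 : -1 ≤ t) (h2 : t ≤ 1) (m : ℕ) :
    |(Chebyshev.T ℝ m).eval t| ≤ 1 := by
  have : t = Real.cos (Real.arccos t) := (Real.cos_arccos h1 h2).symm
  rw [this, Chebyshev.T_real_cos]
  exact Real.abs_cos_le_one _

lemma natDegree_chebT_le : ∀ k : ℕ, (Chebyshev.T ℝ k).natDegree ≤ k := by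
  have H : ∀ k : ℕ, (Chebyshev.T ℝ k).natDegree ≤ k ∧
      (Chebyshev.T ℝ (k+1)).natDegree ≤ k + 1 := by
    intro k
    induction k with
    | zero => exact ⟨by simp [Chebyshev.T_zero], by simp [Chebyshev.T_one]⟩
    | succ k ih =>
      refine ⟨ih.2, ?_⟩
      have h2 : ((k:ℤ) + 1 + 1) = (k:ℤ) + 2 := by ring
      push_cast
      rw [h2, Chebyshev.T_add_two]
      refine le_trans (natDegree_sub_le _ _) (max_le ?_ (le_trans ih.1 (by omega)))
      refine le_trans natDegree_mul_le ?_
      have h4 : (2 * X : ℝ[X]).natDegree ≤ 1 := le_trans natDegree_mul_le (by simp)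
      have := ih.2
      omega
  exact fun k => (H k).1

lemma sum_mulVec {n : ℕ} {ι : Type*} (s : Finset ι) (f : ι → Matrix (Fin n) (Fin n) ℝ)
    (v : Fin n → ℝ) : (∑ i ∈ s, f i) *ᵥ v = ∑ i ∈ s, (f i) *ᵥ v := by
  induction s using Finset.cons_induction with
  | empty => simp [Matrix.zero_mulVec]
  | cons a s ha ih => simp [Finset.sum_cons, Matrix.add_mulVec, ih]

lemma aeval_mem_krylov {n : ℕ} (A : Matrix (Fin n) (Fin n) ℝ) (r₀ : Fin n → ℝ) (M : ℕ)
    (q : ℝ[X]) (hq : q.natDegree < M + 1) :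
    (Polynomial.aeval A q) *ᵥ r₀ ∈ krylov A r₀ M := by
  rw [q.as_sum_range' (M+1) hq, map_sum, sum_mulVec]
  refine Submodule.sum_mem _ fun i hi => ?_
  have hi' : i < M + 1 := Finset.mem_range.mp hi
  have : (Polynomial.aeval A (monomial i (q.coeff i))) *ᵥ r₀ = q.coeff i • ((A ^ i) *ᵥ r₀) := by
    rw [aeval_monomial, Algebra.algebraMap_eq_smul_one, smul_mul_assoc, one_mul,
      smul_mulVec]
  rw [this]
  exact Submodule.smul_mem _ _ (Submodule.subset_span ⟨⟨i, hi'⟩, rfl⟩)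

section Spectral

variable {n : ℕ} {A : Matrix (Fin n) (Fin n) ℝ} (hA : A.IsHermitian)

local notation "U" => (hA.eigenvectorUnitary : Matrix (Fin n) (Fin n) ℝ)
local notation "ev" => hA.eigenvalues

lemma mulVec_congr (M : Matrix (Fin n) (Fin n) ℝ) {f g : Fin n → ℝ} (h : ∀ i, f i = g i) :
    M *ᵥ f = M *ᵥ g := by rw [funext h]

lemma hUtU : (U)ᵀ * U = 1 := (Unitary.mem_iff.mp hA.eigenvectorUnitary.2).1
lemma hUUt : U * (U)ᵀ = 1 := (Unitary.mem_iff.mp hA.eigenvectorUnitary.2).2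

lemma hAU : A * U = U * diagonal ev := by
  have h := congrArg (fun M => M * U) hA.spectral_theorem
  beta_reduce at h
  rw [Unitary.conjStarAlgAut_apply, mul_assoc, (Unitary.mem_iff.mp hA.eigenvectorUnitary.2).1, mul_one] at h
  exact h

lemma key_mulVec (v : Fin n → ℝ) :
    A *ᵥ (U *ᵥ v) = U *ᵥ (fun i => ev i * v i) := by
  rw [mulVec_mulVec, hAU, ← mulVec_mulVec]
  exact mulVec_congr _ fun i => mulVec_diagonal hA.eigenvalues v i

lemma key_aeval (p : ℝ[X]) (v : Fin n → ℝ) :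
    (aeval A p) *ᵥ (U *ᵥ v) = U *ᵥ (fun i => p.eval (ev i) * v i) := by
  induction p using Polynomial.induction_on' with
  | add p q hp hq =>
    simp only [map_add, add_mulVec, hp, hq, eval_add, ← mulVec_add]
    exact mulVec_congr _ fun i => by simp only [Pi.add_apply]; ring
  | monomial k a =>
    have hpow : ∀ k : ℕ, (A ^ k) *ᵥ (U *ᵥ v) = U *ᵥ (fun i => ev i ^ k * v i) := by
      intro k
      induction k with
      | zero => simp
      | succ k ih =>
        rw [pow_succ', ← mulVec_mulVec, ih, key_mulVec hA]
        exact mulVec_congr _ fun i => by ring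
    rw [aeval_monomial, Algebra.algebraMap_eq_smul_one, smul_mul_assoc, one_mul,
      smul_mulVec, hpow, ← mulVec_smul]
    exact mulVec_congr _ fun i => by
      simp only [Pi.smul_apply, smul_eq_mul, eval_monomial]; ring

lemma key_dot (a b : Fin n → ℝ) : (U *ᵥ a) ⬝ᵥ (U *ᵥ b) = a ⬝ᵥ b := by
  rw [dotProduct_mulVec, ← mulVec_transpose, mulVec_mulVec, hUtU, one_mulVec]

lemma key_quad (v : Fin n → ℝ) :
    (U *ᵥ v) ⬝ᵥ (A *ᵥ (U *ᵥ v)) = ∑ i, ev i * (v i)^2 := by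
  rw [key_mulVec hA, key_dot hA]
  simp only [dotProduct]
  exact Finset.sum_congr rfl fun i _ => by ring

lemma surj_U (x : Fin n → ℝ) : U *ᵥ ((U)ᵀ *ᵥ x) = x := by
  rw [mulVec_mulVec, hUUt, one_mulVec]

end Spectral

lemma spectrum_pos {n : ℕ} {A : Matrix (Fin n) (Fin n) ℝ}
    (hpos : ∀ z : Fin n → ℝ, z ≠ 0 → 0 < z ⬝ᵥ (A *ᵥ z))
    {lam : ℝ} (h : lam ∈ spectrum ℝ A) : 0 < lam := by
  have hnu := spectrum.mem_iff.mp h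
  have hdet : ((algebraMap ℝ (Matrix (Fin n) (Fin n) ℝ)) lam - A).det = 0 := by
    by_contra hd
    exact hnu (((Matrix.isUnit_iff_isUnit_det _)).mpr (isUnit_iff_ne_zero.mpr hd))
  obtain ⟨v, hv0, hv⟩ := (Matrix.exists_mulVec_eq_zero_iff).mpr hdet
  have hAv : A *ᵥ v = lam • v := by
    have h1 : (algebraMap ℝ (Matrix (Fin n) (Fin n) ℝ)) lam *ᵥ v - A *ᵥ v = 0 := by
      rw [← Matrix.sub_mulVec]; exact hv
    have h2 : (algebraMap ℝ (Matrix (Fin n) (Fin n) ℝ)) lam *ᵥ v = lam • v := by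
      rw [Algebra.algebraMap_eq_smul_one, smul_mulVec, one_mulVec]
    rw [h2] at h1
    exact (sub_eq_zero.mp h1).symm
  have hq := hpos v hv0
  rw [hAv] at hq
  have hvv : 0 < v ⬝ᵥ v := by
    have := Matrix.dotProduct_star_self_pos_iff (v := v)
    rw [show star v = v from rfl] at this
    exact this.mpr hv0
  rw [dotProduct_smul, smul_eq_mul] at hq
  nlinarith

end CGAux

open Polynomial CGAux

/-- CG convergence bound: for SPD `A` with extreme eigenvalues `λ_min, λ_max`
and `κ = λ_max / λ_min`, for every `m ≥ 1` there exists
`x ∈ x₀ + 𝒦_{m-1}(A, r₀)` with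
`‖x - x*‖_A ≤ 2 ((√κ - 1)/(√κ + 1))ᵐ ‖x₀ - x*‖_A`; in particular the `m`-th CG
iterate, which minimizes `‖x - x*‖_A` over `x₀ + 𝒦_{m-1}(A, r₀)`, satisfies
this bound. -/
theorem cg_convergence_bound {n : ℕ}
    (A : Matrix (Fin n) (Fin n) ℝ) (hsymm : Aᵀ = A)
    (hpos : ∀ z : Fin n → ℝ, z ≠ 0 → 0 < z ⬝ᵥ (A *ᵥ z))
    (lmin lmax : ℝ)
    (hlmin : lmin ∈ spectrum ℝ A ∧ ∀ lam ∈ spectrum ℝ A, lmin ≤ lam)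
    (hlmax : lmax ∈ spectrum ℝ A ∧ ∀ lam ∈ spectrum ℝ A, lam ≤ lmax)
    (κ : ℝ) (hκ : κ = lmax / lmin)
    (b x₀ : Fin n → ℝ) (r₀ : Fin n → ℝ) (hr₀ : r₀ = b - A *ᵥ x₀)
    (xstar : Fin n → ℝ) (hxstar : A *ᵥ xstar = b) :
    ∀ m : ℕ, 1 ≤ m →
      (∃ z ∈ krylov A r₀ (m - 1),
        normA A (x₀ + z - xstar) ≤
          2 * ((Real.sqrt κ - 1) / (Real.sqrt κ + 1)) ^ m * normA A (x₀ - xstar)) ∧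
      (∀ xm : Fin n → ℝ,
        xm - x₀ ∈ krylov A r₀ (m - 1) →
        (∀ x : Fin n → ℝ, x - x₀ ∈ krylov A r₀ (m - 1) →
          normA A (xm - xstar) ≤ normA A (x - xstar)) →
        normA A (xm - xstar) ≤
          2 * ((Real.sqrt κ - 1) / (Real.sqrt κ + 1)) ^ m * normA A (x₀ - xstar)) := by
  intro m hm
  have hA : A.IsHermitian := hsymm
  have hPD : A.PosDef := Matrix.PosDef.of_dotProduct_mulVec_pos hA fun x hx => hpos x hx
  have evpos : ∀ i, 0 < hA.eigenvalues i := fun i => hPD.eigenvalues_pos i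
  have evlb : ∀ i, lmin ≤ hA.eigenvalues i :=
    fun i => hlmin.2 _ (hA.eigenvalues_mem_spectrum_real i)
  have evub : ∀ i, hA.eigenvalues i ≤ lmax :=
    fun i => hlmax.2 _ (hA.eigenvalues_mem_spectrum_real i)
  have hlminpos : 0 < lmin := spectrum_pos hpos hlmin.1
  have hminmax : lmin ≤ lmax := hlmin.2 lmax hlmax.1
  have hκ1 : 1 ≤ κ := by rw [hκ]; exact (one_le_div hlminpos).mpr hminmax
  -- abbreviations
  set w : Fin n → ℝ :=
    ((hA.eigenvectorUnitary : Matrix (Fin n) (Fin n) ℝ))ᵀ *ᵥ (x₀ - xstar) with hw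
  have he₀ : x₀ - xstar = (hA.eigenvectorUnitary : Matrix (Fin n) (Fin n) ℝ) *ᵥ w :=
    (surj_U hA (x₀ - xstar)).symm
  have hr₀A : r₀ = -(A *ᵥ (x₀ - xstar)) := by
    rw [hr₀, ← hxstar, Matrix.mulVec_sub]
    abel
  -- the key construction
  have hkey : ∀ (p : ℝ[X]) (M : ℝ), p.eval 0 = 1 → p.natDegree ≤ m → 0 ≤ M →
      (∀ i, |p.eval (hA.eigenvalues i)| ≤ M) →
      ∃ z ∈ krylov A r₀ (m-1), normA A (x₀ + z - xstar) ≤ M * normA A (x₀ - xstar) := by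
    intro p M hp0 hdeg hM hMb
    obtain ⟨q₀, hq₀⟩ : (X : ℝ[X]) ∣ (p - 1) :=
      X_dvd_iff.mpr (by simp [coeff_sub, coeff_zero_eq_eval_zero, hp0])
    have hdq : q₀.natDegree < m - 1 + 1 := by
      rcases eq_or_ne q₀ 0 with h | h
      · simp [h]
      · have h1 : (X * q₀).natDegree = 1 + q₀.natDegree := by
          rw [natDegree_mul X_ne_zero h, natDegree_X]
        have h2 : (p - 1).natDegree ≤ m :=
          le_trans (natDegree_sub_le _ _) (by simpa using hdeg)
        rw [← hq₀] at h1
        omega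
    refine ⟨(Polynomial.aeval A (-q₀)) *ᵥ r₀,
      aeval_mem_krylov A r₀ (m-1) (-q₀) (by rwa [natDegree_neg]), ?_⟩
    have hz : (Polynomial.aeval A (-q₀)) *ᵥ r₀ =
        (Polynomial.aeval A q₀) *ᵥ (A *ᵥ (x₀ - xstar)) := by
      rw [map_neg, Matrix.neg_mulVec, hr₀A, Matrix.mulVec_neg, neg_neg]
    have hperr : x₀ + (Polynomial.aeval A (-q₀)) *ᵥ r₀ - xstar =
        (Polynomial.aeval A p) *ᵥ (x₀ - xstar) := by
      have hpdecomp : p = 1 + q₀ * X := by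
        rw [mul_comm]; linear_combination hq₀
      rw [hpdecomp, map_add, _root_.map_mul, _root_.map_one, aeval_X, Matrix.add_mulVec,
        Matrix.one_mulVec, ← Matrix.mulVec_mulVec, ← hz]
      abel
    rw [hperr]
    -- quadratic form computations
    have hQerr : ((Polynomial.aeval A p) *ᵥ (x₀ - xstar)) ⬝ᵥ
        (A *ᵥ ((Polynomial.aeval A p) *ᵥ (x₀ - xstar)))
        = ∑ i, hA.eigenvalues i * (p.eval (hA.eigenvalues i) * w i)^2 := by
      rw [he₀, key_aeval hA, key_quad hA]
    have hQ0 : (x₀ - xstar) ⬝ᵥ (A *ᵥ (x₀ - xstar)) = ∑ i, hA.eigenvalues i * (w i)^2 := by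
      conv_lhs => rw [he₀]
      rw [key_quad hA]
    have hsum : ∑ i, hA.eigenvalues i * (p.eval (hA.eigenvalues i) * w i)^2
        ≤ M^2 * ∑ i, hA.eigenvalues i * (w i)^2 := by
      rw [Finset.mul_sum]
      refine Finset.sum_le_sum fun i _ => ?_
      have h1 : p.eval (hA.eigenvalues i)^2 ≤ M^2 :=
        sq_le_sq' (abs_le.mp (hMb i)).1 (abs_le.mp (hMb i)).2
      have h2 := evpos i
      nlinarith [sq_nonneg (w i), mul_nonneg h2.le (sq_nonneg (w i))]
    unfold normA
    calc Real.sqrt (((Polynomial.aeval A p) *ᵥ (x₀ - xstar)) ⬝ᵥ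
          (A *ᵥ ((Polynomial.aeval A p) *ᵥ (x₀ - xstar))))
        ≤ Real.sqrt (M^2 * ((x₀ - xstar) ⬝ᵥ (A *ᵥ (x₀ - xstar)))) := by
          apply Real.sqrt_le_sqrt
          rw [hQerr, hQ0]
          exact hsum
      _ = M * Real.sqrt ((x₀ - xstar) ⬝ᵥ (A *ᵥ (x₀ - xstar))) := by
          rw [Real.sqrt_mul (sq_nonneg M), Real.sqrt_sq hM]
  -- main existence statement
  have main : ∃ z ∈ krylov A r₀ (m - 1),
      normA A (x₀ + z - xstar) ≤
        2 * ((Real.sqrt κ - 1) / (Real.sqrt κ + 1)) ^ m * normA A (x₀ - xstar) := by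
    rcases eq_or_lt_of_le hminmax with heq | hlt
    · -- lmin = lmax : A = lmin • I essentially
      have hev : ∀ i, hA.eigenvalues i = lmin :=
        fun i => le_antisymm (heq ▸ evub i) (evlb i)
      have hc0 : Real.sqrt κ = 1 := by
        rw [hκ, ← heq, div_self hlminpos.ne']; exact Real.sqrt_one
      obtain ⟨z, hz, hbz⟩ := hkey (1 - C lmin⁻¹ * X) 0 (by simp)
        (le_trans (natDegree_sub_le _ _)
          (max_le (by simp) (le_trans natDegree_mul_le (by simp; omega))))
        le_rfl
        (fun i => by
          rw [hev i]
          simp [eval_sub, eval_mul, eval_C, eval_X, inv_mul_cancel₀ hlminpos.ne'])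
      refine ⟨z, hz, ?_⟩
      rw [hc0]
      simpa [zero_pow (by omega : m ≠ 0)] using hbz
    · -- lmin < lmax
      set s := Real.sqrt κ with hs
      have hκgt : 1 < κ := by rw [hκ]; exact (one_lt_div hlminpos).mpr hlt
      have hκpos : 0 < κ := lt_trans one_pos hκgt
      have hs2 : s^2 = κ := Real.sq_sqrt hκpos.le
      have hsnn : 0 ≤ s := Real.sqrt_nonneg κ
      have hsgt : 1 < s := by nlinarith
      have hγ1 : 1 < (s+1)/(s-1) := (one_lt_div (by linarith)).mpr (by linarith)
      have hγ0 : 0 < (s+1)/(s-1) := lt_trans one_pos hγ1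
      have hd : 0 < lmax - lmin := by linarith
      have hκm1 : 0 < κ - 1 := by linarith
      have hκval : κ * lmin = lmax := by rw [hκ]; field_simp
      -- σ = (γ + γ⁻¹)/2
      have hσγ : (lmax+lmin)/(lmax-lmin) = (((s+1)/(s-1)) + ((s+1)/(s-1))⁻¹)/2 := by
        rw [inv_div]
        have h1 : s - 1 ≠ 0 := by linarith
        have h2 : s + 1 ≠ 0 := by linarith
        rw [div_add_div _ _ h1 h2, div_div]
        rw [div_eq_div_iff hd.ne' (by nlinarith : ((s-1)*(s+1)*2 : ℝ) ≠ 0)]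
        nlinarith [hκval, hs2]
      have ht : (Chebyshev.T ℝ m).eval ((lmax+lmin)/(lmax-lmin))
          = (((s+1)/(s-1))^m + (((s+1)/(s-1))⁻¹)^m)/2 := by
        rw [hσγ]; exact chebT_half_add_inv _ hγ0.ne' m
      have htpos : 0 < (Chebyshev.T ℝ m).eval ((lmax+lmin)/(lmax-lmin)) := by
        rw [ht]; positivity
      set t := (Chebyshev.T ℝ m).eval ((lmax+lmin)/(lmax-lmin)) with htdef
      -- the Chebyshev polynomial
      set p : ℝ[X] := C t⁻¹ * ((Chebyshev.T ℝ m).comp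
        (C ((lmax+lmin)/(lmax-lmin)) - C (2/(lmax-lmin)) * X)) with hpdef
      have hp0 : p.eval 0 = 1 := by
        rw [hpdef]
        simp only [eval_mul, eval_C, eval_comp, eval_sub, eval_X, mul_zero, sub_zero]
        exact inv_mul_cancel₀ htpos.ne'
      have hpdeg : p.natDegree ≤ m := by
        rw [hpdef]
        refine le_trans natDegree_mul_le ?_
        have h1 : ((Chebyshev.T ℝ m).comp
            (C ((lmax+lmin)/(lmax-lmin)) - C (2/(lmax-lmin)) * X)).natDegree ≤ m * 1 := by
          refine le_trans natDegree_comp_le (Nat.mul_le_mul (natDegree_chebT_le m) ?_)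
          exact le_trans (natDegree_sub_le _ _)
            (max_le (by simp) (le_trans natDegree_mul_le (by simp)))
        simp only [natDegree_C, zero_add]
        omega
      have hMb : ∀ i, |p.eval (hA.eigenvalues i)| ≤ t⁻¹ := by
        intro i
        rw [hpdef]
        simp only [eval_mul, eval_C, eval_comp, eval_sub, eval_X]
        rw [abs_mul, abs_of_pos (inv_pos.mpr htpos)]
        have hu : (lmax+lmin)/(lmax-lmin) - 2/(lmax-lmin) * hA.eigenvalues i
            = (lmax + lmin - 2*hA.eigenvalues i)/(lmax-lmin) := by ring
        rw [hu]
        have hb1 : (lmax + lmin - 2*hA.eigenvalues i)/(lmax-lmin) ≤ 1 :=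
          (div_le_one hd).mpr (by linarith [evlb i])
        have hb2 : -1 ≤ (lmax + lmin - 2*hA.eigenvalues i)/(lmax-lmin) := by
          rw [le_div_iff₀ hd]; linarith [evub i]
        have := chebT_abs_le_one _ hb2 hb1 m
        calc t⁻¹ * |(Chebyshev.T ℝ m).eval ((lmax + lmin - 2*hA.eigenvalues i)/(lmax-lmin))|
            ≤ t⁻¹ * 1 := by
              exact mul_le_mul_of_nonneg_left this (inv_pos.mpr htpos).le
          _ = t⁻¹ := mul_one _
      have hMle : t⁻¹ ≤ 2 * ((s - 1)/(s + 1))^m := by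
        have hγinv : (((s+1)/(s-1)))⁻¹ = (s-1)/(s+1) := inv_div _ _
        have h1 : ((s+1)/(s-1))^m / 2 ≤ t := by
          rw [ht]
          have : 0 < (((s+1)/(s-1))⁻¹)^m := pow_pos (inv_pos.mpr hγ0) m
          linarith
        have h2 : t⁻¹ ≤ (((s+1)/(s-1))^m / 2)⁻¹ :=
          inv_anti₀ (by positivity) h1
        have h3 : (((s+1)/(s-1))^m / 2)⁻¹ = 2 * ((s - 1)/(s + 1))^m := by
          rw [inv_div, div_eq_mul_inv, ← inv_pow, hγinv, mul_comm]
        linarith [h3 ▸ h2]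
      obtain ⟨z, hz, hbz⟩ := hkey p t⁻¹ hp0 hpdeg (inv_pos.mpr htpos).le hMb
      refine ⟨z, hz, le_trans hbz ?_⟩
      have hnorm : 0 ≤ normA A (x₀ - xstar) := Real.sqrt_nonneg _
      exact mul_le_mul_of_nonneg_right hMle hnorm
  refine ⟨main, ?_⟩
  intro xm hxm hmin
  obtain ⟨z, hz, hb⟩ := main
  refine le_trans (hmin (x₀ + z) ?_) hb
  simpa using hz
end
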